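/- Let M be the (n+m)×(n+m) symmetric block matrix M = [[A, B],[B', 0]], where A ∈ ℝ^{n×n} is positive definite and B ∈ ℝ^{n×m}. Then the smallest eigenvalue of M satisfies σ_min(M) ≥ (1/2)(σ_min(A) − sqrt(σ_min(A)² + 4·s_max(B)²)), where σ_min(A) is the smallest eigenvalue of A and s_max(B) is the largest singular value of B. -/

import Mathlib

open Matrix BigOperators MeasureTheory ProbabilityTheory

/-- The singular values of a real matrix `A`, defined as the square roots of the
eigenvalues of `Aᴴ * A` (not sorted). -/
noncomputable def singularValues {N T : ℕ} (A : Matrix (Fin N) (Fin T) ℝ) : Fin T → ℝ :=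
  fun j => Real.sqrt ((show (Aᵀ * A).IsHermitian by
    simpa [Matrix.conjTranspose_eq_transpose_of_trivial] using
      Matrix.isHermitian_conjTranspose_mul_self A).eigenvalues j)

/-- The nuclear norm of a real matrix: the sum of its singular values. -/
noncomputable def nuclearNorm {N T : ℕ} (A : Matrix (Fin N) (Fin T) ℝ) : ℝ :=
  ∑ j, singularValues A j

/-- The Frobenius norm of a real matrix. -/
noncomputable def frobNorm {N T : ℕ} (A : Matrix (Fin N) (Fin T) ℝ) : ℝ :=
  Real.sqrt (∑ i, ∑ j, (A i j)^2)

/-- The operator (spectral) norm of a real matrix: its largest singular value. -/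
noncomputable def opNorm {N T : ℕ} (A : Matrix (Fin N) (Fin T) ℝ) : ℝ :=
  ⨆ j, singularValues A j

lemma quadForm_eq_sum {ι : Type*} [Fintype ι] [DecidableEq ι] {A : Matrix ι ι ℝ}
    (hA : A.IsHermitian) (x : ι → ℝ) :
    x ⬝ᵥ (A *ᵥ x) = ∑ j, hA.eigenvalues j * (⇑(hA.eigenvectorBasis j) ⬝ᵥ x)^2 ∧
    x ⬝ᵥ x = ∑ j, (⇑(hA.eigenvectorBasis j) ⬝ᵥ x)^2 := by
  have hAt : Aᵀ = A := (A.conjTranspose_eq_transpose_of_trivial ▸ hA.eq)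
  set b := hA.eigenvectorBasis with hb
  have hinner : ∀ (u v : EuclideanSpace ℝ ι), (inner ℝ u v : ℝ) = (u : ι → ℝ) ⬝ᵥ (v : ι → ℝ) := by
    intro u v
    simp [PiLp.inner_apply, dotProduct, mul_comm]
  constructor
  · have h := b.sum_inner_mul_inner (WithLp.toLp 2 x : EuclideanSpace ℝ ι) (WithLp.toLp 2 (A *ᵥ x : ι → ℝ) : EuclideanSpace ℝ ι)
    rw [hinner] at h
    simp only [WithLp.ofLp_toLp] at h
    rw [← h]
    apply Finset.sum_congr rfl
    intro j _
    rw [hinner, hinner]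
    have hbj : (⇑(b j) : ι → ℝ) ⬝ᵥ (A *ᵥ x) = hA.eigenvalues j * ((⇑(b j) : ι → ℝ) ⬝ᵥ x) := by
      rw [dotProduct_mulVec, ← mulVec_transpose, hAt, hA.mulVec_eigenvectorBasis,
        smul_dotProduct, smul_eq_mul]
    show (x ⬝ᵥ (⇑(b j) : ι → ℝ)) * ((⇑(b j) : ι → ℝ) ⬝ᵥ (A *ᵥ x)) = _
    rw [hbj, dotProduct_comm]
    ring
  · have h := b.sum_inner_mul_inner (WithLp.toLp 2 x : EuclideanSpace ℝ ι) (WithLp.toLp 2 x : EuclideanSpace ℝ ι)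
    rw [hinner] at h
    simp only [WithLp.ofLp_toLp] at h
    rw [← h]
    apply Finset.sum_congr rfl
    intro j _
    rw [hinner, hinner]
    show (x ⬝ᵥ (⇑(b j) : ι → ℝ)) * ((⇑(b j) : ι → ℝ) ⬝ᵥ x) = _
    rw [dotProduct_comm]
    ring

lemma rayleigh_lower {ι : Type*} [Fintype ι] [DecidableEq ι] {A : Matrix ι ι ℝ}
    (hA : A.IsHermitian) {c : ℝ} (hc : ∀ j, c ≤ hA.eigenvalues j) (x : ι → ℝ) :
    c * (x ⬝ᵥ x) ≤ x ⬝ᵥ (A *ᵥ x) := by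
  obtain ⟨h1, h2⟩ := quadForm_eq_sum hA x
  rw [h1, h2, Finset.mul_sum]
  exact Finset.sum_le_sum fun j _ =>
    mul_le_mul_of_nonneg_right (hc j) (sq_nonneg _)

lemma rayleigh_upper {ι : Type*} [Fintype ι] [DecidableEq ι] {A : Matrix ι ι ℝ}
    (hA : A.IsHermitian) {c : ℝ} (hc : ∀ j, hA.eigenvalues j ≤ c) (x : ι → ℝ) :
    x ⬝ᵥ (A *ᵥ x) ≤ c * (x ⬝ᵥ x) := by
  obtain ⟨h1, h2⟩ := quadForm_eq_sum hA x
  rw [h1, h2, Finset.mul_sum]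
  exact Finset.sum_le_sum fun j _ =>
    mul_le_mul_of_nonneg_right (hc j) (sq_nonneg _)

/-- `‖Bᵀ x‖² ≤ b² ‖x‖²` where `b` is the largest singular value of `B`. -/
lemma sv_bound {n m : ℕ} (B : Matrix (Fin n) (Fin m) ℝ) (x : Fin n → ℝ) :
    (Bᵀ *ᵥ x) ⬝ᵥ (Bᵀ *ᵥ x) ≤ (⨆ k, singularValues B k)^2 * (x ⬝ᵥ x) := by
  set b := ⨆ k, singularValues B k with hbdef
  set u := Bᵀ *ᵥ x with hu
  have hGherm : (Bᵀ * B).IsHermitian := by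
    simpa [Matrix.conjTranspose_eq_transpose_of_trivial] using
      Matrix.isHermitian_conjTranspose_mul_self B
  have heig : ∀ k, hGherm.eigenvalues k ≤ b^2 := by
    intro k
    have h0 : 0 ≤ hGherm.eigenvalues k :=
      (Matrix.posSemidef_conjTranspose_mul_self B).eigenvalues_nonneg k
    have hle : singularValues B k ≤ b :=
      le_ciSup (Set.Finite.bddAbove (Set.finite_range _)) k
    have hb0 : 0 ≤ b := le_trans (Real.sqrt_nonneg _) hle
    have : singularValues B k ^ 2 ≤ b ^ 2 := pow_le_pow_left₀ (Real.sqrt_nonneg _) hle 2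
    rwa [singularValues, Real.sq_sqrt h0] at this
  -- quadratic form bound for BᵀB (note Bᴴ = Bᵀ over ℝ)
  have hBH : Bᴴ = Bᵀ := B.conjTranspose_eq_transpose_of_trivial
  have hq : u ⬝ᵥ ((Bᴴ * B) *ᵥ u) ≤ b^2 * (u ⬝ᵥ u) := rayleigh_upper hGherm heig u
  have hq2 : (B *ᵥ u) ⬝ᵥ (B *ᵥ u) ≤ b^2 * (u ⬝ᵥ u) := by
    have : u ⬝ᵥ ((Bᴴ * B) *ᵥ u) = (B *ᵥ u) ⬝ᵥ (B *ᵥ u) := by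
      rw [hBH, ← mulVec_mulVec, dotProduct_mulVec, vecMul_transpose, dotProduct_comm]
    linarith [hq, this ▸ hq]
  -- Cauchy-Schwarz: (u⬝u)² = (x ⬝ (B *ᵥ u))² ≤ (x⬝x)((B*ᵥu)⬝(B*ᵥu))
  have hcs : (u ⬝ᵥ u)^2 ≤ (x ⬝ᵥ x) * ((B *ᵥ u) ⬝ᵥ (B *ᵥ u)) := by
    have h1 : u ⬝ᵥ u = x ⬝ᵥ (B *ᵥ u) := by
      rw [hu, mulVec_transpose, dotProduct_mulVec]
    have h2 : (x ⬝ᵥ (B *ᵥ u))^2 ≤ (x ⬝ᵥ x) * ((B *ᵥ u) ⬝ᵥ (B *ᵥ u)) := by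
      simpa [dotProduct, pow_two, Finset.sum_mul_sum] using
        Finset.sum_mul_sq_le_sq_mul_sq Finset.univ x (B *ᵥ u)
    rw [h1]; exact h2
  have hxx : 0 ≤ x ⬝ᵥ x := Finset.sum_nonneg fun i _ => mul_self_nonneg _
  have huu : 0 ≤ u ⬝ᵥ u := Finset.sum_nonneg fun i _ => mul_self_nonneg _
  rcases eq_or_lt_of_le huu with h | h
  · rw [← h]
    positivity
  · nlinarith [hcs, hq2, h, hxx]

/-- For the symmetric block matrix `M = [[A, B],[Bᵀ, 0]]` with `A`
positive definite, every eigenvalue of `M` is at least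
`(1/2)(σ_min(A) − √(σ_min(A)² + 4 s_max(B)²))`. -/
theorem blockMatrix_eigenvalue_lowerBound {n m : ℕ}
    (A : Matrix (Fin n) (Fin n) ℝ) (B : Matrix (Fin n) (Fin m) ℝ)
    (hA : A.PosDef)
    (hM : (Matrix.fromBlocks A B Bᵀ 0).IsHermitian) :
    ∀ i, (1/2) * ((⨅ j, hA.isHermitian.eigenvalues j) -
        Real.sqrt ((⨅ j, hA.isHermitian.eigenvalues j)^2 + 4 * (⨆ k, singularValues B k)^2))
      ≤ hM.eigenvalues i := by
  intro i
  set a := ⨅ j, hA.isHermitian.eigenvalues j with ha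
  set b := ⨆ k, singularValues B k with hbdef
  set lam := hM.eigenvalues i with hlamdef
  set s := Real.sqrt (a^2 + 4*b^2) with hsdef
  have hs0 : 0 ≤ s := Real.sqrt_nonneg _
  have hs2 : s^2 = a^2 + 4*b^2 := Real.sq_sqrt (by positivity)
  rcases le_or_gt 0 lam with hl | hl
  · have h1 : a ≤ s := by
      calc a ≤ |a| := le_abs_self a
        _ = Real.sqrt (a^2) := (Real.sqrt_sq_eq_abs a).symm
        _ ≤ s := Real.sqrt_le_sqrt (by nlinarith [sq_nonneg b])
    linarith
  · have hv := hM.mulVec_eigenvectorBasis i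
    set v := hM.eigenvectorBasis i with hvdef
    set x : Fin n → ℝ := fun j => v (Sum.inl j) with hxdef
    set y : Fin m → ℝ := fun j => v (Sum.inr j) with hydef
    have hxy : (⇑v : Fin n ⊕ Fin m → ℝ) = Sum.elim x y := by
      funext j; cases j <;> rfl
    rw [hxy, fromBlocks_mulVec] at hv
    have h1 : A *ᵥ x + B *ᵥ y = lam • x := by
      funext j; exact congrFun hv (Sum.inl j)
    have h2 : Bᵀ *ᵥ x = lam • y := by
      funext j
      have := congrFun hv (Sum.inr j)
      simpa [Matrix.zero_mulVec] using this
    have hvne : v ≠ 0 := hM.eigenvectorBasis.orthonormal.ne_zero i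
    have hx0 : x ≠ 0 := by
      intro hx
      have hBx : Bᵀ *ᵥ x = 0 := by rw [hx, mulVec_zero]
      have hy0 : y = 0 := by
        rcases smul_eq_zero.mp (hBx ▸ h2).symm with h | h
        · exact absurd h (ne_of_lt hl)
        · exact h
      apply hvne
      have hco : (⇑v : Fin n ⊕ Fin m → ℝ) = 0 := by
        rw [hxy, hx, hy0]
        funext j; cases j <;> rfl
      exact congrArg (WithLp.toLp 2) (funext fun j => congrFun hco j)
    have e4 : x ⬝ᵥ (lam • x) = lam * (x ⬝ᵥ x) := by
      rw [dotProduct_smul, smul_eq_mul]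
    have e1 : x ⬝ᵥ (lam • x) = x ⬝ᵥ (A *ᵥ x) + x ⬝ᵥ (B *ᵥ y) := by
      rw [← h1, dotProduct_add]
    have e2 : x ⬝ᵥ (B *ᵥ y) = lam * (y ⬝ᵥ y) := by
      rw [dotProduct_mulVec, ← mulVec_transpose, h2, smul_dotProduct, smul_eq_mul]
    have e3 : (Bᵀ *ᵥ x) ⬝ᵥ (Bᵀ *ᵥ x) = lam^2 * (y ⬝ᵥ y) := by
      rw [h2, smul_dotProduct, dotProduct_smul, smul_eq_mul, smul_eq_mul]
      ring
    have e5 : lam * (x ⬝ᵥ x) = x ⬝ᵥ (A *ᵥ x) + lam * (y ⬝ᵥ y) := by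
      rw [← e4, e1, e2]
    have key : lam^2 * (x ⬝ᵥ x) = lam * (x ⬝ᵥ (A *ᵥ x)) + (Bᵀ *ᵥ x) ⬝ᵥ (Bᵀ *ᵥ x) := by
      rw [e3]; linear_combination lam * e5
    have hAlow : a * (x ⬝ᵥ x) ≤ x ⬝ᵥ (A *ᵥ x) :=
      rayleigh_lower hA.isHermitian
        (fun j => ciInf_le (Set.Finite.bddBelow (Set.finite_range _)) j) x
    have hBup : (Bᵀ *ᵥ x) ⬝ᵥ (Bᵀ *ᵥ x) ≤ b^2 * (x ⬝ᵥ x) := sv_bound B x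
    have ht : 0 < x ⬝ᵥ x := by
      have hnn : 0 ≤ x ⬝ᵥ x := Finset.sum_nonneg fun i _ => mul_self_nonneg _
      have hne : x ⬝ᵥ x ≠ 0 := fun h => hx0 (dotProduct_self_eq_zero.mp h)
      exact lt_of_le_of_ne hnn (Ne.symm hne)
    have hq : lam^2 ≤ lam * a + b^2 := by
      have hpa : lam * (x ⬝ᵥ (A *ᵥ x)) ≤ lam * (a * (x ⬝ᵥ x)) :=
        mul_le_mul_of_nonpos_left hAlow (le_of_lt hl)
      nlinarith [key, hBup, hpa, ht]
    nlinarith [hq, hs0, hs2, sq_nonneg (2*lam - a + s), hl]
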